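/- arXiv:1811.06750 — 4 statements merged into one kernel-verified Lean document; each statement's English description precedes it below -/
import Mathlib

section
/- Let a ∈ ℝ, δ₀ > 0, and let f, g : [a, a + δ₀] → ℝ be continuous functions with g(a) = 0, g(y) > 0 for all y ∈ (a, a + δ₀], f(a) = 0, and f, g differentiable at a (from the right) with g'(a) > 0. Then there exists δ ∈ (0, δ₀] such that the iterated integral I(δ) := ∫ₐ^{a+δ} ∫ₓ^{a+δ} (1/g(y)) · exp(∫ₓ^y f(s)/g(s) ds) dy dx is finite. -/
open MeasureTheory Set

lemma aux_rpow_lintegral_lt_top (a δ : ℝ) (hδ : 0 ≤ δ) :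
    (∫⁻ t in Set.Ioc a (a+δ), ENNReal.ofReal ((t-a) ^ (-(1/2):ℝ))) < ⊤ := by
  have h1 : IntervalIntegrable (fun t : ℝ => t ^ (-(1/2):ℝ)) volume 0 δ :=
    intervalIntegral.intervalIntegrable_rpow' (by norm_num)
  have h2 := h1.comp_sub_right a
  rw [zero_add, add_comm δ a] at h2
  have h3 : IntegrableOn (fun t : ℝ => (t - a) ^ (-(1/2):ℝ)) (Set.Ioc a (a+δ)) volume := by
    rw [← intervalIntegrable_iff_integrableOn_Ioc_of_le (by linarith)]
    exact h2
  exact h3.setLIntegral_lt_top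


/-- Accessibility of the boundary in the case `f a = 0`: the speed/scale iterated
integral `I(δ) = ∫ₐ^{a+δ} ∫ₓ^{a+δ} (1/g(y)) exp(∫ₓ^y f/g) dy dx` is finite for some
`δ ∈ (0, δ₀]`. -/
theorem speed_scale_integral_finite_of_drift_zero (a δ₀ : ℝ) (hδ₀ : 0 < δ₀)
    (f g : ℝ → ℝ) (f' g' : ℝ)
    (hfc : ContinuousOn f (Set.Icc a (a + δ₀)))
    (hgc : ContinuousOn g (Set.Icc a (a + δ₀)))
    (hga : g a = 0) (hfa : f a = 0)
    (hgpos : ∀ y ∈ Set.Ioc a (a + δ₀), 0 < g y)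
    (hf : HasDerivWithinAt f f' (Set.Ici a) a)
    (hg : HasDerivWithinAt g g' (Set.Ici a) a)
    (hg' : 0 < g') :
    ∃ δ, 0 < δ ∧ δ ≤ δ₀ ∧
      (∫⁻ x in Set.Ioc a (a + δ), ∫⁻ y in Set.Ioc x (a + δ),
        ENNReal.ofReal ((1 / g y) * Real.exp (∫ s in x..y, f s / g s))) < ⊤ := by
  -- slope facts
  have hgs := hasDerivWithinAt_iff_tendsto_slope.mp hg
  have hfs := hasDerivWithinAt_iff_tendsto_slope.mp hf
  rw [Set.Ici_sdiff_left] at hgs hfs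
  have h1 : ∀ᶠ y in nhdsWithin a (Set.Ioi a), g' / 2 < slope g a y :=
    hgs.eventually (eventually_gt_nhds (by linarith))
  have h2 : ∀ᶠ y in nhdsWithin a (Set.Ioi a), slope f a y ∈ Set.Ioo (f' - 1) (f' + 1) :=
    hfs.eventually (Ioo_mem_nhds (by linarith) (by linarith))
  have h3 := (h1.and h2)
  rw [eventually_nhdsWithin_iff, Metric.eventually_nhds_iff] at h3
  obtain ⟨ε, hε, hP⟩ := h3
  set δ : ℝ := min δ₀ (ε / 2) with hδdef
  have hδpos : 0 < δ := lt_min hδ₀ (by linarith)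
  have hδle : δ ≤ δ₀ := min_le_left _ _
  refine ⟨δ, hδpos, hδle, ?_⟩
  -- pointwise facts on Ioc a (a+δ)
  have hkey : ∀ y ∈ Set.Ioc a (a + δ), g' / 2 * (y - a) < g y ∧ |f y| ≤ (|f'| + 1) * (y - a) := by
    intro y hy
    have hya : 0 < y - a := by linarith [hy.1]
    have hd : dist y a < ε := by
      rw [Real.dist_eq, abs_of_pos hya]
      have : y ≤ a + δ := hy.2
      have : δ ≤ ε / 2 := min_le_right _ _
      linarith [hy.2]
    have hPy := hP hd hy.1
    have hslope_g : slope g a y = g y / (y - a) := by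
      simp [slope_def_field, hga]
    have hslope_f : slope f a y = f y / (y - a) := by
      simp [slope_def_field, hfa]
    constructor
    · have := hPy.1
      rw [hslope_g, lt_div_iff₀ hya] at this
      linarith
    · have hlo := hPy.2.1
      have hhi := hPy.2.2
      rw [hslope_f] at hlo hhi
      have habs : |f y / (y - a)| ≤ |f'| + 1 := by
        rw [abs_le]
        constructor
        · have : -(|f'| + 1) ≤ f' - 1 := by
            have := neg_abs_le f'; linarith
          linarith
        · have : f' + 1 ≤ |f'| + 1 := by
            have := le_abs_self f'; linarith
          linarith
      calc |f y| = |f y / (y - a)| * (y - a) := by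
            rw [abs_div, abs_of_pos hya]; field_simp
        _ ≤ (|f'| + 1) * (y - a) := by
            apply mul_le_mul_of_nonneg_right habs hya.le
  set M : ℝ := 2 * (|f'| + 1) / g' with hMdef
  have hM0 : 0 ≤ M := by positivity
  -- bound on f/g
  have hfg_bound : ∀ s ∈ Set.Ioc a (a + δ), |f s / g s| ≤ M := by
    intro s hs
    have hsa : 0 < s - a := by linarith [hs.1]
    obtain ⟨hgs', hfs'⟩ := hkey s hs
    have hgspos : 0 < g s := lt_trans (by positivity) hgs'
    rw [abs_div, abs_of_pos hgspos]
    calc |f s| / g s ≤ ((|f'| + 1) * (s - a)) / (g' / 2 * (s - a)) := by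
          apply div_le_div₀ (by positivity) hfs' (by positivity) hgs'.le
      _ = M := by rw [hMdef]; field_simp
  set K : ℝ := (2 / g') * Real.exp (M * δ) with hKdef
  have hK0 : 0 ≤ K := by positivity
  -- main pointwise bound
  have hmain : ∀ x ∈ Set.Ioc a (a + δ), ∀ y ∈ Set.Ioc x (a + δ),
      (1 / g y) * Real.exp (∫ s in x..y, f s / g s)
        ≤ K * ((x - a) ^ (-(1/2):ℝ) * (y - a) ^ (-(1/2):ℝ)) := by
    intro x hx y hy
    have hxa : 0 < x - a := by linarith [hx.1]
    have hxy : x < y := hy.1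
    have hya : 0 < y - a := by linarith
    have hyIoc : y ∈ Set.Ioc a (a + δ) := ⟨lt_trans hx.1 hxy, hy.2⟩
    obtain ⟨hgy, _⟩ := hkey y hyIoc
    have hgypos : 0 < g y := lt_trans (by positivity) hgy
    -- exp bound
    have hint : |∫ s in x..y, f s / g s| ≤ M * δ := by
      have hb : ∀ s ∈ Set.uIoc x y, ‖f s / g s‖ ≤ M := by
        intro s hs
        rw [Set.uIoc_of_le hxy.le] at hs
        exact hfg_bound s ⟨lt_trans hx.1 hs.1, le_trans hs.2 hy.2⟩
      have := intervalIntegral.norm_integral_le_of_norm_le_const hb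
      rw [Real.norm_eq_abs] at this
      calc |∫ s in x..y, f s / g s| ≤ M * |y - x| := this
        _ ≤ M * δ := by
            apply mul_le_mul_of_nonneg_left _ hM0
            rw [abs_of_pos (by linarith)]
            linarith [hy.2, hx.1]
    have hexp : Real.exp (∫ s in x..y, f s / g s) ≤ Real.exp (M * δ) :=
      Real.exp_le_exp.mpr (le_trans (le_abs_self _) hint)
    -- 1/g y bound
    have hgy2 : 1 / g y ≤ (2 / g') * (y - a)⁻¹ := by
      rw [div_le_iff₀ hgypos] at *
      have h1le : 1 ≤ (2 / g') * (y - a)⁻¹ * g y := by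
        have : (2 / g') * (y - a)⁻¹ * (g' / 2 * (y - a)) = 1 := by field_simp
        calc (1:ℝ) = (2 / g') * (y - a)⁻¹ * (g' / 2 * (y - a)) := this.symm
          _ ≤ (2 / g') * (y - a)⁻¹ * g y := by
              apply mul_le_mul_of_nonneg_left hgy.le (by positivity)
      linarith
    -- rpow facts
    have hr1 : (y - a)⁻¹ = (y - a) ^ (-(1/2):ℝ) * (y - a) ^ (-(1/2):ℝ) := by
      rw [← Real.rpow_add hya]
      norm_num
      rw [Real.rpow_neg_one]
    have hr2 : (y - a) ^ (-(1/2):ℝ) ≤ (x - a) ^ (-(1/2):ℝ) :=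
      Real.rpow_le_rpow_of_nonpos hxa (by linarith) (by norm_num)
    calc (1 / g y) * Real.exp (∫ s in x..y, f s / g s)
        ≤ ((2 / g') * (y - a)⁻¹) * Real.exp (M * δ) := by
          apply mul_le_mul hgy2 hexp (Real.exp_pos _).le (by positivity)
      _ = K * ((y - a) ^ (-(1/2):ℝ) * (y - a) ^ (-(1/2):ℝ)) := by
          rw [hKdef, ← hr1]; ring
      _ ≤ K * ((x - a) ^ (-(1/2):ℝ) * (y - a) ^ (-(1/2):ℝ)) := by
          apply mul_le_mul_of_nonneg_left _ hK0
          apply mul_le_mul_of_nonneg_right hr2 (by positivity)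
  -- lintegral chain
  set r : ℝ → ENNReal := fun t => ENNReal.ofReal ((t - a) ^ (-(1/2):ℝ)) with hrdef
  set L : ENNReal := ∫⁻ t in Set.Ioc a (a + δ), r t with hLdef
  have hL : L < ⊤ := aux_rpow_lintegral_lt_top a δ hδpos.le
  have hrint : (∫⁻ t in Set.Ioc a (a + δ), r t) = L := rfl
  have step1 : (∫⁻ x in Set.Ioc a (a + δ), ∫⁻ y in Set.Ioc x (a + δ),
        ENNReal.ofReal ((1 / g y) * Real.exp (∫ s in x..y, f s / g s)))
      ≤ ∫⁻ x in Set.Ioc a (a + δ), (ENNReal.ofReal K * L) * r x := by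
    apply setLIntegral_mono' measurableSet_Ioc
    intro x hx
    have hxa : 0 ≤ (x - a) ^ (-(1/2):ℝ) := Real.rpow_nonneg (by linarith [hx.1]) _
    calc (∫⁻ y in Set.Ioc x (a + δ),
          ENNReal.ofReal ((1 / g y) * Real.exp (∫ s in x..y, f s / g s)))
        ≤ ∫⁻ y in Set.Ioc x (a + δ), (ENNReal.ofReal (K * (x - a) ^ (-(1/2):ℝ))) * r y := by
          apply setLIntegral_mono' measurableSet_Ioc
          intro y hy
          rw [hrdef, ← ENNReal.ofReal_mul (by positivity)]
          apply ENNReal.ofReal_le_ofReal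
          calc (1 / g y) * Real.exp (∫ s in x..y, f s / g s)
              ≤ K * ((x - a) ^ (-(1/2):ℝ) * (y - a) ^ (-(1/2):ℝ)) := hmain x hx y hy
            _ = K * (x - a) ^ (-(1/2):ℝ) * (y - a) ^ (-(1/2):ℝ) := by ring
      _ = (ENNReal.ofReal (K * (x - a) ^ (-(1/2):ℝ))) * ∫⁻ y in Set.Ioc x (a + δ), r y :=
          lintegral_const_mul' _ _ ENNReal.ofReal_ne_top
      _ ≤ (ENNReal.ofReal (K * (x - a) ^ (-(1/2):ℝ))) * L := by
          apply mul_le_mul_right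
          rw [hLdef]
          exact lintegral_mono_set (Set.Ioc_subset_Ioc_left hx.1.le)
      _ = (ENNReal.ofReal K * L) * r x := by
          rw [ENNReal.ofReal_mul hK0, hrdef]
          ring
  have step2 : (∫⁻ x in Set.Ioc a (a + δ), (ENNReal.ofReal K * L) * r x)
      = (ENNReal.ofReal K * L) * L := by
    rw [lintegral_const_mul' _ _ (ENNReal.mul_ne_top ENNReal.ofReal_ne_top hL.ne), hrint]
  refine lt_of_le_of_lt step1 ?_
  rw [step2]
  exact ENNReal.mul_lt_top (ENNReal.mul_lt_top ENNReal.ofReal_lt_top hL) hL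
end

section
/- Let a ∈ ℝ, δ₀ > 0, and let f, g : [a, a + δ₀] → ℝ with f continuous, f differentiable at a (from the right), f(a) > 0, g twice continuously differentiable, g(a) = 0, g'(a) > 0, and g(y) > 0 for all y ∈ (a, a + δ₀]. If f(a) ≥ g'(a), then for every sufficiently small δ ∈ (0, δ₀] the iterated integral I(δ) := ∫ₐ^{a+δ} ∫ₓ^{a+δ} (1/g(y)) · exp(∫ₓ^y f(s)/g(s) ds) dy dx is infinite. -/
open MeasureTheory Set intervalIntegral

/-- The integral of `(x - a)⁻¹` over `Ioc a b` is infinite when `a < b`. -/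
lemma aux_lintegral_inv_top {a b : ℝ} (hab : a < b) :
    ∫⁻ x in Set.Ioc a b, ENNReal.ofReal ((x - a)⁻¹) = ⊤ := by
  by_contra h
  have hmeas : AEStronglyMeasurable (fun x : ℝ => (x - a)⁻¹)
      (volume.restrict (Set.Ioc a b)) :=
    ((measurable_id.sub_const a).inv).aestronglyMeasurable
  have hnn : 0 ≤ᵐ[volume.restrict (Set.Ioc a b)] fun x : ℝ => (x - a)⁻¹ := by
    filter_upwards [ae_restrict_mem measurableSet_Ioc] with x hx
    have hx0 : (0:ℝ) < x - a := sub_pos.2 hx.1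
    positivity
  have hint : Integrable (fun x : ℝ => (x - a)⁻¹) (volume.restrict (Set.Ioc a b)) :=
    (lintegral_ofReal_ne_top_iff_integrable hmeas hnn).1 h
  have hIi : IntervalIntegrable (fun x : ℝ => (x - a)⁻¹) volume a b :=
    (intervalIntegrable_iff_integrableOn_Ioc_of_le hab.le).2 hint
  rcases intervalIntegrable_sub_inv_iff.1 hIi with h1 | h2
  · exact hab.ne h1
  · exact h2 (Set.left_mem_uIcc)

/-- From one-sided differentiability, an eventual lower secant bound. -/
lemma aux_slope_lower {f : ℝ → ℝ} {f' a c : ℝ} (hf : HasDerivWithinAt f f' (Set.Ici a) a)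
    (hc : c < f') : ∃ δ > 0, ∀ s ∈ Set.Ioc a (a + δ), c * (s - a) ≤ f s - f a := by
  have hslope : Filter.Tendsto (slope f a) (nhdsWithin a (Set.Ioi a)) (nhds f') := by
    have := hasDerivWithinAt_iff_tendsto_slope.1 hf
    rwa [show Set.Ici a \ {a} = Set.Ioi a from Set.Ici_sdiff_left] at this
  have hev : ∀ᶠ s in nhdsWithin a (Set.Ioi a), c ≤ slope f a s :=
    hslope.eventually (eventually_ge_nhds hc)
  obtain ⟨u, hu, hsub⟩ := mem_nhdsGT_iff_exists_Ioc_subset.1 hev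
  refine ⟨u - a, sub_pos.2 hu, fun s hs => ?_⟩
  have hs' : s ∈ Set.Ioc a u := ⟨hs.1, by linarith [hs.2]⟩
  have hsl : c ≤ slope f a s := hsub hs'
  rw [slope_def_field] at hsl
  have hsa : (0:ℝ) < s - a := sub_pos.2 hs.1
  calc c * (s - a) ≤ ((f s - f a) / (s - a)) * (s - a) :=
        mul_le_mul_of_nonneg_right hsl hsa.le
    _ = f s - f a := by field_simp

/-- Inaccessibility of the boundary in the case `f a ≥ g' a > 0`: the speed/scale
iterated integral `I(δ) = ∫ₐ^{a+δ} ∫ₓ^{a+δ} (1/g(y)) exp(∫ₓ^y f/g) dy dx` is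
infinite for every sufficiently small `δ ∈ (0, δ₀]`. -/
theorem speed_scale_integral_infinite_of_large_drift (a δ₀ : ℝ) (hδ₀ : 0 < δ₀)
    (f g : ℝ → ℝ) (f' g' : ℝ)
    (hfc : ContinuousOn f (Set.Icc a (a + δ₀)))
    (hf : HasDerivWithinAt f f' (Set.Ici a) a)
    (hfa : 0 < f a)
    (hgC2 : ContDiffOn ℝ 2 g (Set.Icc a (a + δ₀)))
    (hga : g a = 0)
    (hg : HasDerivWithinAt g g' (Set.Ici a) a)
    (hg' : 0 < g')
    (hgpos : ∀ y ∈ Set.Ioc a (a + δ₀), 0 < g y)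
    (hcond : g' ≤ f a) :
    ∃ δ₁, 0 < δ₁ ∧ δ₁ ≤ δ₀ ∧ ∀ δ, 0 < δ → δ ≤ δ₁ →
      (∫⁻ x in Set.Ioc a (a + δ), ∫⁻ y in Set.Ioc x (a + δ),
        ENNReal.ofReal ((1 / g y) * Real.exp (∫ s in x..y, f s / g s))) = ⊤ := by
  have haδ : a < a + δ₀ := by linarith
  set J := Set.Icc a (a + δ₀) with hJdef
  have haJ : a ∈ J := ⟨le_refl a, haδ.le⟩
  have hJu : UniqueDiffOn ℝ J := uniqueDiffOn_Icc haδ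
  have hconv : Convex ℝ J := convex_Icc _ _
  set D := derivWithin g J with hDdef
  set D2 := derivWithin D J with hD2def
  have hgd : DifferentiableOn ℝ g J := hgC2.differentiableOn (by norm_num)
  have hDcd : ContDiffOn ℝ 1 D J := hgC2.derivWithin hJu (by norm_num)
  have hDd : DifferentiableOn ℝ D J := hDcd.differentiableOn (by norm_num)
  have hD2c : ContinuousOn D2 J := hDcd.continuousOn_derivWithin hJu le_rfl
  obtain ⟨C₂, hC₂⟩ : ∃ C₂, ∀ s ∈ J, |D2 s| ≤ C₂ := by
    obtain ⟨C₂, hC₂⟩ := isCompact_Icc.exists_bound_of_continuousOn hD2c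
    exact ⟨C₂, fun s hs => by simpa [Real.norm_eq_abs] using hC₂ s hs⟩
  have hC₂0 : 0 ≤ C₂ := le_trans (abs_nonneg _) (hC₂ a haJ)
  have hDa : D a = g' :=
    (hg.mono (Set.Icc_subset_Ici_self)).derivWithin (hJu a haJ)
  have hgder : ∀ t ∈ J, HasDerivWithinAt g (D t) J t :=
    fun t ht => (hgd t ht).hasDerivWithinAt
  have hDder : ∀ t ∈ J, HasDerivWithinAt D (D2 t) J t :=
    fun t ht => (hDd t ht).hasDerivWithinAt
  -- first-order bound on the derivative of g
  have L1 : ∀ t ∈ J, |D t - g'| ≤ C₂ * (t - a) := by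
    intro t ht
    have := hconv.norm_image_sub_le_of_norm_hasDerivWithin_le hDder
      (fun s hs => by simpa [Real.norm_eq_abs] using hC₂ s hs) haJ ht
    rw [hDa] at this
    simpa [Real.norm_eq_abs, abs_of_nonneg (sub_nonneg.2 ht.1)] using this
  -- second-order Taylor bound for g
  have L2 : ∀ s ∈ J, |g s - g' * (s - a)| ≤ C₂ * (s - a) ^ 2 := by
    intro s hs
    set φ : ℝ → ℝ := fun t => g t - g' * (t - a) with hφdef
    have hsubJ : Set.Icc a s ⊆ J := Set.Icc_subset_Icc le_rfl hs.2
    have hconv' : Convex ℝ (Set.Icc a s) := convex_Icc _ _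
    have hφder : ∀ t ∈ Set.Icc a s, HasDerivWithinAt φ (D t - g') (Set.Icc a s) t := by
      intro t ht
      have h1 : HasDerivWithinAt (fun t : ℝ => g' * (t - a)) g' (Set.Icc a s) t := by
        simpa using (((hasDerivAt_id t).sub_const a).const_mul g').hasDerivWithinAt
      exact ((hgder t (hsubJ ht)).mono hsubJ).sub h1
    have hbound : ∀ t ∈ Set.Icc a s, ‖D t - g'‖ ≤ C₂ * (s - a) := by
      intro t ht
      have h1 := L1 t (hsubJ ht)
      have h2 : t - a ≤ s - a := by linarith [ht.2]
      rw [Real.norm_eq_abs]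
      calc |D t - g'| ≤ C₂ * (t - a) := h1
        _ ≤ C₂ * (s - a) := mul_le_mul_of_nonneg_left h2 hC₂0
    have hmem_a : a ∈ Set.Icc a s := ⟨le_rfl, hs.1⟩
    have hmem_s : s ∈ Set.Icc a s := ⟨hs.1, le_rfl⟩
    have := hconv'.norm_image_sub_le_of_norm_hasDerivWithin_le hφder hbound hmem_a hmem_s
    have hφa : φ a = 0 := by simp [hφdef, hga]
    have hφs : φ s = g s - g' * (s - a) := rfl
    rw [hφa, sub_zero, hφs, Real.norm_eq_abs, Real.norm_eq_abs,
      abs_of_nonneg (sub_nonneg.2 hs.1)] at this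
    calc |g s - g' * (s - a)| ≤ C₂ * (s - a) * (s - a) := this
      _ = C₂ * (s - a) ^ 2 := by ring
  -- eventual lower bounds from differentiability at a
  obtain ⟨δa, hδa0, hglow⟩ := aux_slope_lower hg (half_lt_self hg')
  obtain ⟨δb, hδb0, hflow⟩ := aux_slope_lower hf (show f' - 1 < f' by linarith)
  set L : ℝ := |f'| + 1 with hLdef
  have hL0 : 0 < L := by positivity
  set M : ℝ := 2 * (L + C₂) / g' with hMdef
  have hM0 : 0 ≤ M := by positivity
  set C : ℝ := g' + C₂ * δ₀ with hCdef
  have hCpos : 0 < C := by positivity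
  set K : ℝ := Real.exp (-(M * δ₀)) / C with hKdef
  have hKpos : 0 < K := by positivity
  clear_value L M C K
  set δ₁ : ℝ := min δ₀ (min δa δb) with hδ₁def
  have hδ₁0 : 0 < δ₁ := lt_min hδ₀ (lt_min hδa0 hδb0)
  have hδ₁δ₀ : δ₁ ≤ δ₀ := min_le_left _ _
  have hδ₁a : δ₁ ≤ δa := le_trans (min_le_right _ _) (min_le_left _ _)
  have hδ₁b : δ₁ ≤ δb := le_trans (min_le_right _ _) (min_le_right _ _)
  -- key pointwise bound on f/g
  have hkey : ∀ s ∈ Set.Ioc a (a + δ₁), (s - a)⁻¹ - M ≤ f s / g s := by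
    intro s hs
    have ht0 : (0:ℝ) < s - a := sub_pos.2 hs.1
    have htδ₀ : s - a ≤ δ₀ := by linarith [hs.2, hδ₁δ₀]
    have hsJ : s ∈ J := ⟨hs.1.le, by linarith [hs.2, hδ₁δ₀]⟩
    have hgs : 0 < g s := hgpos s ⟨hs.1, by linarith [hs.2, hδ₁δ₀]⟩
    rw [le_div_iff₀ hgs]
    have h1 : g s ≤ g' * (s - a) + C₂ * (s - a) ^ 2 := by
      have := (abs_le.1 (L2 s hsJ)).2; linarith
    have h2 : (g' / 2) * (s - a) ≤ g s := by
      have h2' := hglow s ⟨hs.1, by linarith [hs.2, hδ₁a]⟩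
      rw [hga, sub_zero] at h2'; exact h2'
    have h3 : f a - L * (s - a) ≤ f s := by
      have h4 := hflow s ⟨hs.1, by linarith [hs.2, hδ₁b]⟩
      have h5 : -L * (s - a) ≤ (f' - 1) * (s - a) := by
        apply mul_le_mul_of_nonneg_right _ ht0.le
        have := neg_abs_le f'
        simp only [hLdef]; linarith
      linarith
    have e2 : g s * (s - a)⁻¹ ≤ g' + C₂ * (s - a) := by
      rw [← div_eq_mul_inv, div_le_iff₀ ht0]
      nlinarith
    have e3 : L * (s - a) + C₂ * (s - a) ≤ M * g s := by
      have h4 : M * ((g' / 2) * (s - a)) ≤ M * g s := mul_le_mul_of_nonneg_left h2 hM0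
      have h5 : L * (s - a) + C₂ * (s - a) = M * ((g' / 2) * (s - a)) := by
        rw [hMdef]; field_simp
      linarith
    have e1 : ((s - a)⁻¹ - M) * g s = g s * (s - a)⁻¹ - M * g s := by ring
    linarith
  -- linear upper bound on g
  have hCbound : ∀ y ∈ Set.Ioc a (a + δ₁), g y ≤ C * (y - a) := by
    intro y hy
    have hy0 : 0 ≤ y - a := by linarith [hy.1]
    have hyδ₀ : y - a ≤ δ₀ := by linarith [hy.2, hδ₁δ₀]
    have hyJ : y ∈ J := ⟨hy.1.le, by linarith [hy.2, hδ₁δ₀]⟩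
    have := (abs_le.1 (L2 y hyJ)).2
    rw [hCdef]
    nlinarith [mul_nonneg (mul_nonneg hC₂0 hy0) (sub_nonneg.2 hyδ₀)]
  refine ⟨δ₁, hδ₁0, hδ₁δ₀, fun δ hδ hδδ₁ => ?_⟩
  set b : ℝ := a + δ with hbdef
  have hab : a < b := by simp only [hbdef]; linarith
  have hbδ₁ : b ≤ a + δ₁ := by simp only [hbdef]; linarith
  have hbδ₀ : b ≤ a + δ₀ := by linarith [hδ₁δ₀]
  -- lower bound for the inner integral
  have hinner : ∀ x ∈ Set.Ioc a b,
      ENNReal.ofReal (K * (x - a)⁻¹) * ENNReal.ofReal (b - x) ≤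
        ∫⁻ y in Set.Ioc x b,
          ENNReal.ofReal ((1 / g y) * Real.exp (∫ s in x..y, f s / g s)) := by
    intro x hx
    have hxa : a < x := hx.1
    have hxb : x ≤ b := hx.2
    have hpt : ∀ y ∈ Set.Ioc x b, ENNReal.ofReal (K * (x - a)⁻¹) ≤
        ENNReal.ofReal ((1 / g y) * Real.exp (∫ s in x..y, f s / g s)) := by
      intro y hy
      apply ENNReal.ofReal_le_ofReal
      have hxy : x < y := hy.1
      have hyb : y ≤ b := hy.2
      have hya : a < y := lt_trans hxa hxy
      have hy1 : y ∈ Set.Ioc a (a + δ₁) := ⟨hya, le_trans hyb hbδ₁⟩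
      have hgy : 0 < g y := hgpos y ⟨hya, le_trans hyb hbδ₀⟩
      have hsub1 : Set.Icc x y ⊆ Set.Ioc a (a + δ₁) := fun s hs =>
        ⟨lt_of_lt_of_le hxa hs.1, le_trans hs.2 (le_trans hyb hbδ₁)⟩
      have hsub2 : Set.Icc x y ⊆ J := fun s hs =>
        ⟨le_trans hxa.le hs.1, le_trans hs.2 (le_trans hyb hbδ₀)⟩
      have hcont_fg : ContinuousOn (fun s => f s / g s) (Set.Icc x y) := by
        apply (hfc.mono hsub2).div (hgC2.continuousOn.mono hsub2)
        intro s hs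
        exact (hgpos s ⟨lt_of_lt_of_le hxa hs.1,
          le_trans hs.2 (le_trans hyb hbδ₀)⟩).ne'
      have hint1 : IntervalIntegrable (fun s => f s / g s) volume x y :=
        hcont_fg.intervalIntegrable_of_Icc hxy.le
      have hcont_inv : ContinuousOn (fun s : ℝ => (s - a)⁻¹) (Set.Icc x y) := by
        apply (continuousOn_id.sub continuousOn_const).inv₀
        intro s hs
        exact (sub_pos.2 (lt_of_lt_of_le hxa hs.1)).ne'
      have hint3 : IntervalIntegrable (fun s : ℝ => (s - a)⁻¹) volume x y :=
        hcont_inv.intervalIntegrable_of_Icc hxy.le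
      have hint2 : IntervalIntegrable (fun s : ℝ => (s - a)⁻¹ - M) volume x y :=
        hint3.sub intervalIntegrable_const
      have hmono : (∫ s in x..y, ((s - a)⁻¹ - M)) ≤ ∫ s in x..y, f s / g s :=
        integral_mono_on hxy.le hint2 hint1 (fun s hs => hkey s (hsub1 hs))
      have hcomp : (∫ s in x..y, (s - a)⁻¹) = Real.log ((y - a) / (x - a)) := by
        have h := intervalIntegral.integral_comp_sub_right (fun u : ℝ => u⁻¹) a
          (a := x) (b := y)
        rw [h, integral_inv]
        rw [Set.uIcc_of_le (by linarith : x - a ≤ y - a)]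
        rintro ⟨h0, _⟩
        linarith
      have hsplit : (∫ s in x..y, ((s - a)⁻¹ - M)) =
          Real.log ((y - a) / (x - a)) - (y - x) * M := by
        rw [intervalIntegral.integral_sub hint3 intervalIntegrable_const, hcomp,
          intervalIntegral.integral_const, smul_eq_mul]
      have hyx : (y - x) * M ≤ δ₀ * M :=
        mul_le_mul_of_nonneg_right (by linarith [hδ₁δ₀]) hM0
      have hlog : Real.log ((y - a) / (x - a)) - M * δ₀ ≤ ∫ s in x..y, f s / g s := by
        rw [hsplit] at hmono; linarith
      have hratio : (0:ℝ) < (y - a) / (x - a) := by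
        apply div_pos <;> linarith
      have hexp : ((y - a) / (x - a)) * Real.exp (-(M * δ₀)) ≤
          Real.exp (∫ s in x..y, f s / g s) := by
        calc ((y - a) / (x - a)) * Real.exp (-(M * δ₀))
            = Real.exp (Real.log ((y - a) / (x - a)) + -(M * δ₀)) := by
              rw [Real.exp_add, Real.exp_log hratio]
          _ ≤ Real.exp (∫ s in x..y, f s / g s) := Real.exp_le_exp.2 (by linarith)
      have h1g : 1 / (C * (y - a)) ≤ 1 / g y :=
        one_div_le_one_div_of_le hgy (hCbound y hy1)
      have hya0 : (0:ℝ) < y - a := by linarith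
      have hxa0 : (0:ℝ) < x - a := by linarith
      calc K * (x - a)⁻¹
          = (1 / (C * (y - a))) * (((y - a) / (x - a)) * Real.exp (-(M * δ₀))) := by
            rw [hKdef]; field_simp
        _ ≤ (1 / g y) * Real.exp (∫ s in x..y, f s / g s) :=
            mul_le_mul h1g hexp (by positivity) (by positivity)
    calc ENNReal.ofReal (K * (x - a)⁻¹) * ENNReal.ofReal (b - x)
        = ∫⁻ _ in Set.Ioc x b, ENNReal.ofReal (K * (x - a)⁻¹) := by
          rw [setLIntegral_const, Real.volume_Ioc]
      _ ≤ _ := by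
          apply lintegral_mono_ae
          filter_upwards [ae_restrict_mem measurableSet_Ioc] with y hy using hpt y hy
  -- assemble: the outer integral is infinite
  have hsubhalf : Set.Ioc a (a + δ / 2) ⊆ Set.Ioc a b :=
    Set.Ioc_subset_Ioc le_rfl (by simp only [hbdef]; linarith)
  have h1 : ∫⁻ x in Set.Ioc a (a + δ / 2),
      ENNReal.ofReal (K * (δ / 2)) * ENNReal.ofReal ((x - a)⁻¹) = ⊤ := by
    rw [lintegral_const_mul' _ _ ENNReal.ofReal_ne_top,
      aux_lintegral_inv_top (by linarith : a < a + δ / 2),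
      ENNReal.mul_top (ENNReal.ofReal_pos.2 (by positivity)).ne']
  have h2 : ∫⁻ x in Set.Ioc a (a + δ / 2),
      ENNReal.ofReal (K * (δ / 2)) * ENNReal.ofReal ((x - a)⁻¹) ≤
      ∫⁻ x in Set.Ioc a (a + δ / 2), ∫⁻ y in Set.Ioc x b,
        ENNReal.ofReal ((1 / g y) * Real.exp (∫ s in x..y, f s / g s)) := by
    apply lintegral_mono_ae
    filter_upwards [ae_restrict_mem measurableSet_Ioc] with x hx
    have hxIb : x ∈ Set.Ioc a b := hsubhalf hx
    have hxa0 : (0:ℝ) < x - a := sub_pos.2 hx.1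
    calc ENNReal.ofReal (K * (δ / 2)) * ENNReal.ofReal ((x - a)⁻¹)
        = ENNReal.ofReal (K * (x - a)⁻¹) * ENNReal.ofReal (δ / 2) := by
          rw [← ENNReal.ofReal_mul (by positivity), ← ENNReal.ofReal_mul (by positivity)]
          ring_nf
      _ ≤ ENNReal.ofReal (K * (x - a)⁻¹) * ENNReal.ofReal (b - x) := by
          apply mul_le_mul_right
          apply ENNReal.ofReal_le_ofReal
          simp only [hbdef]; linarith [hx.2]
      _ ≤ _ := hinner x hxIb
  have h3 : ∫⁻ x in Set.Ioc a (a + δ / 2), ∫⁻ y in Set.Ioc x b,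
        ENNReal.ofReal ((1 / g y) * Real.exp (∫ s in x..y, f s / g s)) ≤
      ∫⁻ x in Set.Ioc a b, ∫⁻ y in Set.Ioc x b,
        ENNReal.ofReal ((1 / g y) * Real.exp (∫ s in x..y, f s / g s)) :=
    lintegral_mono' (Measure.restrict_mono hsubhalf le_rfl) le_rfl
  exact top_unique (h1 ▸ le_trans h2 h3)
end

section
/- Let a ∈ ℝ, δ₀ > 0, and let f, g : [a, a + δ₀] → ℝ with f continuous, f differentiable at a (from the right), f(a) > 0, g twice continuously differentiable, g(a) = 0, g'(a) > 0, and g(y) > 0 for all y ∈ (a, a + δ₀]. If f(a) < g'(a), then there exists δ ∈ (0, δ₀] such that the iterated integral I(δ) := ∫ₐ^{a+δ} ∫ₓ^{a+δ} (1/g(y)) · exp(∫ₓ^y f(s)/g(s) ds) dy dx is finite. -/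
open MeasureTheory Set Filter Real Topology intervalIntegral

private lemma rpow_shift_lintegral_lt_top (a δ r : ℝ) (hδ : 0 < δ) (hr : -1 < r) :
    (∫⁻ t in Set.Ioc a (a + δ), ENNReal.ofReal ((t - a) ^ r)) < ⊤ := by
  have h1 : IntervalIntegrable (fun x : ℝ => x ^ r) volume 0 δ := intervalIntegrable_rpow' hr
  have h2 : IntervalIntegrable (fun t : ℝ => (t - a) ^ r) volume a (a + δ) := by
    have := h1.comp_sub_right a
    simpa [add_comm] using this
  have h3 : IntegrableOn (fun t : ℝ => (t - a) ^ r) (Set.Ioc a (a + δ)) :=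
    (intervalIntegrable_iff_integrableOn_Ioc_of_le (by linarith)).mp h2
  exact h3.lintegral_lt_top

/-- Accessibility of the boundary in the case `0 < f a < g' a`: the speed/scale
iterated integral `I(δ) = ∫ₐ^{a+δ} ∫ₓ^{a+δ} (1/g(y)) exp(∫ₓ^y f/g) dy dx` is
finite for some `δ ∈ (0, δ₀]`. -/
theorem speed_scale_integral_finite_of_small_drift (a δ₀ : ℝ) (hδ₀ : 0 < δ₀)
    (f g : ℝ → ℝ) (f' g' : ℝ)
    (hfc : ContinuousOn f (Set.Icc a (a + δ₀)))
    (hf : HasDerivWithinAt f f' (Set.Ici a) a)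
    (hfa : 0 < f a)
    (hgC2 : ContDiffOn ℝ 2 g (Set.Icc a (a + δ₀)))
    (hga : g a = 0)
    (hg : HasDerivWithinAt g g' (Set.Ici a) a)
    (hg' : 0 < g')
    (hgpos : ∀ y ∈ Set.Ioc a (a + δ₀), 0 < g y)
    (hcond : f a < g') :
    ∃ δ, 0 < δ ∧ δ ≤ δ₀ ∧
      (∫⁻ x in Set.Ioc a (a + δ), ∫⁻ y in Set.Ioc x (a + δ),
        ENNReal.ofReal ((1 / g y) * Real.exp (∫ s in x..y, f s / g s))) < ⊤ := by
  set p : ℝ := (f a / g' + 1) / 2 with hp_def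
  have hfag : f a / g' < 1 := (div_lt_one hg').mpr hcond
  have hfag0 : 0 < f a / g' := div_pos hfa hg'
  have hp0 : 0 < p := by positivity
  have hp1 : p < 1 := by simp only [hp_def]; linarith
  have hpf : f a / g' < p := by simp only [hp_def]; linarith
  -- slope of g tends to g'
  have hg_slope : Tendsto (fun s => g s / (s - a)) (𝓝[>] a) (𝓝 g') := by
    have h := hasDerivWithinAt_iff_tendsto_slope.mp hg
    rw [Set.Ici_sdiff_left] at h
    refine h.congr (fun s => ?_)
    simp [slope_def_field, hga, div_eq_mul_inv]
  have hf_t : Tendsto f (𝓝[>] a) (𝓝 (f a)) := by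
    have h1 : Tendsto f (𝓝[Set.Icc a (a + δ₀)] a) (𝓝 (f a)) :=
      hfc.continuousWithinAt (by constructor <;> linarith)
    have h2 : 𝓝[>] a = 𝓝[Set.Ioc a (a + δ₀)] a :=
      (nhdsWithin_Ioc_eq_nhdsGT (by linarith : a < a + δ₀)).symm
    rw [h2]
    exact h1.mono_left (nhdsWithin_mono _ Set.Ioc_subset_Icc_self)
  have hh : Tendsto (fun s => f s / (g s / (s - a))) (𝓝[>] a) (𝓝 (f a / g')) :=
    hf_t.div hg_slope (ne_of_gt hg')
  have hev : ∀ᶠ s in 𝓝[>] a, g' / 2 < g s / (s - a) ∧ f s / (g s / (s - a)) < p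
      ∧ s ∈ Set.Ioc a (a + δ₀) := by
    filter_upwards [hg_slope.eventually (eventually_gt_nhds (show g' / 2 < g' by linarith)),
      hh.eventually (eventually_lt_nhds hpf),
      Ioc_mem_nhdsGT (by linarith : a < a + δ₀)] with s h1 h2 h3
    exact ⟨h1, h2, h3⟩
  obtain ⟨u, hu, hsub⟩ := mem_nhdsGT_iff_exists_Ioc_subset.mp hev
  set δ : ℝ := min (u - a) δ₀ with hδ_def
  have hδ0 : 0 < δ := lt_min (by simpa using hu) hδ₀
  have hδδ₀ : δ ≤ δ₀ := min_le_right _ _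
  have hδu : a + δ ≤ u := by
    have := min_le_left (u - a) δ₀
    simp only [hδ_def]; linarith
  -- pointwise consequences on Ioc a (a+δ)
  have key : ∀ s ∈ Set.Ioc a (a + δ), g' / 2 * (s - a) < g s ∧ f s * (s - a) ≤ p * g s := by
    intro s hs
    have hsa : 0 < s - a := by simp [sub_pos]; exact hs.1
    obtain ⟨h1, h2, h3⟩ := hsub ⟨hs.1, hs.2.trans hδu⟩
    have hslope_pos : 0 < g s / (s - a) := lt_trans (by positivity) h1
    have hgs : g' / 2 * (s - a) < g s := by
      rw [← lt_div_iff₀ hsa] at *; exact h1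
    refine ⟨hgs, ?_⟩
    have := (div_lt_iff₀ hslope_pos).mp h2
    have := mul_lt_mul_of_pos_right this hsa
    rw [mul_assoc, div_mul_cancel₀ _ (ne_of_gt hsa)] at this
    linarith
  have hgpos' : ∀ s ∈ Set.Ioc a (a + δ), 0 < g s := by
    intro s hs
    have hsa : 0 < s - a := sub_pos.mpr hs.1
    exact lt_trans (by positivity) (key s hs).1
  refine ⟨δ, hδ0, hδδ₀, ?_⟩
  set C : ℝ := 2 / g' with hC_def
  have hC : 0 < C := by positivity
  -- pointwise bound on the integrand
  have main_bound : ∀ x ∈ Set.Ioc a (a + δ), ∀ y ∈ Set.Ioc x (a + δ),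
      (1 / g y) * Real.exp (∫ s in x..y, f s / g s)
        ≤ C * ((y - a) ^ (p - 1) * (x - a) ^ (-p)) := by
    intro x hx y hy
    have hax : a < x := hx.1
    have hxy : x < y := hy.1
    have hyδ : y ≤ a + δ := hy.2
    have hyS : y ∈ Set.Ioc a (a + δ) := ⟨hax.trans hxy, hyδ⟩
    have hX : 0 < x - a := sub_pos.mpr hax
    have hY : 0 < y - a := sub_pos.mpr hyS.1
    have hgy : 0 < g y := hgpos' y hyS
    have sub_mem : ∀ s ∈ Set.Icc x y, s ∈ Set.Ioc a (a + δ) := fun s hs =>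
      ⟨lt_of_lt_of_le hax hs.1, le_trans hs.2 hyδ⟩
    -- bound 1 : 1 / g y ≤ 2 / (g' * (y - a))
    have b1 : 1 / g y ≤ 2 / (g' * (y - a)) := by
      have h := (key y hyS).1
      rw [div_le_div_iff₀ hgy (by positivity)]
      nlinarith
    -- interval integral bound
    have hIccsub : Set.Icc x y ⊆ Set.Icc a (a + δ₀) := fun s hs =>
      ⟨le_of_lt (lt_of_lt_of_le hax hs.1), le_trans hs.2 (le_trans hyδ (by linarith))⟩
    have intA : IntervalIntegrable (fun s => f s / g s) volume x y := by
      apply ContinuousOn.intervalIntegrable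
      rw [Set.uIcc_of_le hxy.le]
      exact (hfc.mono hIccsub).div ((hgC2.continuousOn).mono hIccsub)
        (fun s hs => ne_of_gt (hgpos' s (sub_mem s hs)))
    have intB : IntervalIntegrable (fun s => p * (s - a)⁻¹) volume x y := by
      apply ContinuousOn.intervalIntegrable
      rw [Set.uIcc_of_le hxy.le]
      exact continuousOn_const.mul (ContinuousOn.inv₀
        ((continuousOn_id.sub continuousOn_const))
        (fun s hs => ne_of_gt (sub_pos.mpr (lt_of_lt_of_le hax hs.1))))
    have b2 : (∫ s in x..y, f s / g s) ≤ p * Real.log ((y - a) / (x - a)) := by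
      have hmono : ∀ s ∈ Set.Icc x y, f s / g s ≤ p * (s - a)⁻¹ := by
        intro s hs
        have hsm := sub_mem s hs
        have hsa : 0 < s - a := sub_pos.mpr hsm.1
        have hgs : 0 < g s := hgpos' s hsm
        rw [← div_eq_mul_inv, div_le_div_iff₀ hgs hsa]
        exact (key s hsm).2
      have hval : (∫ s in x..y, p * (s - a)⁻¹) = p * Real.log ((y - a) / (x - a)) := by
        rw [intervalIntegral.integral_const_mul]
        congr 1
        have := intervalIntegral.integral_comp_sub_right (fun t : ℝ => t⁻¹) a (a := x) (b := y)
        rw [this, integral_inv]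
        exact Set.notMem_uIcc_of_lt hX hY
      rw [← hval]
      exact intervalIntegral.integral_mono_on hxy.le intA intB hmono
    have b3 : Real.exp (∫ s in x..y, f s / g s) ≤ ((y - a) / (x - a)) ^ p := by
      rw [Real.rpow_def_of_pos (by positivity)]
      exact Real.exp_le_exp.mpr (by rw [mul_comm]; exact b2)
    calc (1 / g y) * Real.exp (∫ s in x..y, f s / g s)
        ≤ (2 / (g' * (y - a))) * (((y - a) / (x - a)) ^ p) :=
          mul_le_mul b1 b3 (Real.exp_pos _).le (by positivity)
      _ = C * ((y - a) ^ (p - 1) * (x - a) ^ (-p)) := by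
          rw [Real.div_rpow hY.le hX.le, Real.rpow_sub hY, Real.rpow_one,
            Real.rpow_neg hX.le, hC_def]
          have hXp : (0:ℝ) < (x - a) ^ p := Real.rpow_pos_of_pos hX p
          have hYp : (0:ℝ) < (y - a) ^ p := Real.rpow_pos_of_pos hY p
          field_simp
  -- lintegral computation
  set K := ∫⁻ t in Set.Ioc a (a + δ), ENNReal.ofReal ((t - a) ^ (p - 1)) with hK_def
  have hK : K < ⊤ := rpow_shift_lintegral_lt_top a δ (p - 1) hδ0 (by linarith)
  have hJ : (∫⁻ t in Set.Ioc a (a + δ), ENNReal.ofReal ((t - a) ^ (-p))) < ⊤ :=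
    rpow_shift_lintegral_lt_top a δ (-p) hδ0 (by linarith)
  have inner_bound : ∀ x ∈ Set.Ioc a (a + δ),
      (∫⁻ y in Set.Ioc x (a + δ),
        ENNReal.ofReal ((1 / g y) * Real.exp (∫ s in x..y, f s / g s)))
        ≤ K * ENNReal.ofReal (C * (x - a) ^ (-p)) := by
    intro x hx
    calc (∫⁻ y in Set.Ioc x (a + δ),
          ENNReal.ofReal ((1 / g y) * Real.exp (∫ s in x..y, f s / g s)))
        ≤ ∫⁻ y in Set.Ioc x (a + δ),
            ENNReal.ofReal ((C * (x - a) ^ (-p)) * (y - a) ^ (p - 1)) := by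
          refine lintegral_mono_ae (((ae_restrict_mem measurableSet_Ioc)).mono fun y hy => ?_)
          refine ENNReal.ofReal_le_ofReal ?_
          have := main_bound x hx y hy
          calc (1 / g y) * Real.exp (∫ s in x..y, f s / g s)
              ≤ C * ((y - a) ^ (p - 1) * (x - a) ^ (-p)) := this
            _ = (C * (x - a) ^ (-p)) * (y - a) ^ (p - 1) := by ring
      _ ≤ ∫⁻ y in Set.Ioc a (a + δ),
            ENNReal.ofReal ((C * (x - a) ^ (-p)) * (y - a) ^ (p - 1)) :=
          lintegral_mono_set (Set.Ioc_subset_Ioc_left hx.1.le)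
      _ = K * ENNReal.ofReal (C * (x - a) ^ (-p)) := by
          have hc0 : 0 ≤ C * (x - a) ^ (-p) :=
            mul_nonneg hC.le (Real.rpow_nonneg (by have := hx.1; linarith) _)
          simp_rw [ENNReal.ofReal_mul hc0]
          rw [lintegral_const_mul' _ _ ENNReal.ofReal_ne_top, hK_def, mul_comm]
  calc (∫⁻ x in Set.Ioc a (a + δ), ∫⁻ y in Set.Ioc x (a + δ),
        ENNReal.ofReal ((1 / g y) * Real.exp (∫ s in x..y, f s / g s)))
      ≤ ∫⁻ x in Set.Ioc a (a + δ),
          (K * ENNReal.ofReal C) * ENNReal.ofReal ((x - a) ^ (-p)) := by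
        refine lintegral_mono_ae (((ae_restrict_mem measurableSet_Ioc)).mono fun x hx => ?_)
        calc (∫⁻ y in Set.Ioc x (a + δ),
              ENNReal.ofReal ((1 / g y) * Real.exp (∫ s in x..y, f s / g s)))
            ≤ K * ENNReal.ofReal (C * (x - a) ^ (-p)) := inner_bound x hx
          _ = (K * ENNReal.ofReal C) * ENNReal.ofReal ((x - a) ^ (-p)) := by
              rw [ENNReal.ofReal_mul hC.le, mul_assoc]
    _ = (K * ENNReal.ofReal C) *
          ∫⁻ x in Set.Ioc a (a + δ), ENNReal.ofReal ((x - a) ^ (-p)) :=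
        lintegral_const_mul' _ _ (ENNReal.mul_ne_top hK.ne ENNReal.ofReal_ne_top)
    _ < ⊤ := ENNReal.mul_lt_top (ENNReal.mul_lt_top hK ENNReal.ofReal_lt_top) hJ
end

section
/- Let K := ∫₀¹ e^y log((1 − y)/y) dy and define T : [0, 1] → ℝ by T(x) = ((e^{−x} − 1)/(e − 1))·K + e^{−x}·∫₀^x e^y log((1 − y)/y) dy. Then: (i) T(0) = 0 and T(1) = 0; (ii) T is twice differentiable on (0, 1) and satisfies x(1 − x)·(T'(x) + T''(x)) = −1 for all x ∈ (0, 1); (iii) T is bounded on [0, 1]. -/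
open Real MeasureTheory intervalIntegral Set Filter

namespace MeanAbs

noncomputable def f (y : ℝ) : ℝ := Real.exp y * Real.log ((1 - y) / y)

lemma intInt_log : IntervalIntegrable Real.log volume 0 1 := by
  have h : IntervalIntegrable (fun x : ℝ => -Real.log x) volume 0 1 := by
    apply intervalIntegrable_deriv_of_nonneg (g := fun x : ℝ => x - x * Real.log x)
    · exact (continuous_id.sub Real.continuous_mul_log).continuousOn
    · intro x hx
      simp only [min_eq_left, max_eq_right, zero_le_one] at hx
      have h1 := (hasDerivAt_id x).sub (Real.hasDerivAt_mul_log hx.1.ne')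
      exact h1.congr_deriv (by ring)
    · intro x hx
      simp only [min_eq_left, max_eq_right, zero_le_one] at hx
      have := Real.log_nonpos hx.1.le hx.2.le
      linarith
  have h2 := h.neg
  convert h2 using 1
  funext x; simp

lemma intInt_log1 : IntervalIntegrable (fun y : ℝ => Real.log (1 - y)) volume 0 1 := by
  have := (intInt_log.comp_sub_left 1).symm
  simpa using this

lemma ae_eq_split : f =ᵐ[volume.restrict (Set.uIoc (0:ℝ) 1)]
    (fun y : ℝ => Real.exp y * (Real.log (1 - y) - Real.log y)) := by
  have h1 : ∀ᵐ y : ℝ, y ≠ 1 := by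
    have : volume ({1} : Set ℝ) = 0 := measure_singleton 1
    rw [ae_iff]
    convert this using 2
    ext y; simp
  filter_upwards [ae_restrict_mem measurableSet_uIoc, ae_restrict_of_ae h1] with y hy hy1
  rw [Set.uIoc_of_le (by norm_num : (0:ℝ) ≤ 1)] at hy
  have hy0 : y ≠ 0 := hy.1.ne'
  have hy1' : (1 : ℝ) - y ≠ 0 := sub_ne_zero.mpr (Ne.symm hy1)
  simp only [f, Real.log_div hy1' hy0]

lemma intInt_f01 : IntervalIntegrable f volume 0 1 := by
  have h1 : IntervalIntegrable
      (fun y : ℝ => Real.exp y * (Real.log (1 - y) - Real.log y)) volume 0 1 :=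
    (intInt_log1.sub intInt_log).continuousOn_mul Real.continuous_exp.continuousOn
  rw [intervalIntegrable_iff] at h1 ⊢
  exact h1.congr ae_eq_split.symm

lemma intInt_f (x : ℝ) (hx : x ∈ Icc (0:ℝ) 1) : IntervalIntegrable f volume 0 x :=
  intInt_f01.mono_set (by rw [Set.uIcc_of_le hx.1, Set.uIcc_of_le (zero_le_one)]
                          exact Icc_subset_Icc le_rfl hx.2)

lemma contOn_f : ContinuousOn f (Ioo (0:ℝ) 1) := by
  intro x hx
  apply ContinuousAt.continuousWithinAt
  have h1 : ContinuousAt (fun y : ℝ => (1 - y) / y) x :=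
    (continuousAt_const.sub continuousAt_id).div continuousAt_id hx.1.ne'
  have h2 : (1 - x) / x ≠ 0 := div_ne_zero (by linarith [hx.2]) hx.1.ne'
  exact Real.continuous_exp.continuousAt.mul (h1.log h2)

lemma hasDerivF (x : ℝ) (hx : x ∈ Ioo (0:ℝ) 1) :
    HasDerivAt (fun u => ∫ y in (0:ℝ)..u, f y) (f x) x := by
  refine intervalIntegral.integral_hasDerivAt_right (intInt_f x ⟨hx.1.le, hx.2.le⟩)
    (contOn_f.stronglyMeasurableAtFilter isOpen_Ioo x hx)
    (contOn_f.continuousAt (isOpen_Ioo.mem_nhds hx))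


end MeanAbs

open MeanAbs

/-- The mean absorption time for the SDE `dX = X(1−X) dt + √(2X(1−X)) dW`:
`T x = ((e^{−x} − 1)/(e − 1))·K + e^{−x}·∫₀ˣ e^y log((1−y)/y) dy` vanishes at `0`
and `1`, solves `x(1−x)(T' + T'') = −1` on `(0,1)`, and is bounded on `[0,1]`. -/
theorem mean_absorption_time_with_drift (K : ℝ)
    (hK : K = ∫ y in (0:ℝ)..1, Real.exp y * Real.log ((1 - y) / y))
    (T : ℝ → ℝ)
    (hT : ∀ x, T x = ((Real.exp (-x) - 1) / (Real.exp 1 - 1)) * K +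
      Real.exp (-x) * ∫ y in (0:ℝ)..x, Real.exp y * Real.log ((1 - y) / y)) :
    T 0 = 0 ∧ T 1 = 0 ∧
    (∀ x ∈ Set.Ioo (0:ℝ) 1, DifferentiableAt ℝ T x ∧ DifferentiableAt ℝ (deriv T) x ∧
      x * (1 - x) * (deriv T x + deriv (deriv T) x) = -1) ∧
    ∃ M, ∀ x ∈ Set.Icc (0:ℝ) 1, |T x| ≤ M := by
  set F : ℝ → ℝ := fun u => ∫ y in (0:ℝ)..u, f y with hF
  set A : ℝ := K / (Real.exp 1 - 1) with hA
  have he2 : (2:ℝ) ≤ Real.exp 1 := by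
    have := Real.add_one_le_exp (1:ℝ); linarith
  have heK : Real.exp 1 - 1 ≠ 0 := by linarith
  have hTF : ∀ x, T x = (Real.exp (-x) - 1) * A + Real.exp (-x) * F x := by
    intro x
    rw [hT x, hA, hF]
    simp only [f]
    ring
  have hFK : F 1 = K := by rw [hF]; simp only [f]; exact hK.symm
  refine ⟨?_, ?_, ?_, ?_⟩
  · rw [hTF 0]
    simp [hF, intervalIntegral.integral_same]
  · rw [hTF 1, hFK, hA]
    have h1 : Real.exp (-1) * Real.exp 1 = 1 := by
      rw [← Real.exp_add]; norm_num
    field_simp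
    linear_combination K * h1
  · intro x hx
    have hx0 : x ≠ 0 := hx.1.ne'
    have hx1 : (1:ℝ) - x ≠ 0 := by have := hx.2; intro h; linarith [sub_eq_zero.mp h]
    have hE : HasDerivAt (fun x : ℝ => Real.exp (-x)) (Real.exp (-x) * (-1)) x :=
      (Real.hasDerivAt_exp (-x)).comp x (hasDerivAt_neg x)
    have hexp1 : Real.exp (-x) * Real.exp x = 1 := by rw [← Real.exp_add]; simp
    -- derivative of T
    set G : ℝ → ℝ := fun x => -(Real.exp (-x) * (A + F x)) + Real.log ((1 - x) / x) with hG
    have hderivT : ∀ z ∈ Set.Ioo (0:ℝ) 1, HasDerivAt T (G z) z := by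
      intro z hz
      have hz1 : Real.exp (-z) * Real.exp z = 1 := by rw [← Real.exp_add]; simp
      have hEz : HasDerivAt (fun x : ℝ => Real.exp (-x)) (Real.exp (-z) * (-1)) z :=
        (Real.hasDerivAt_exp (-z)).comp z (hasDerivAt_neg z)
      have h1 : HasDerivAt (fun x => (Real.exp (-x) - 1) * A + Real.exp (-x) * F x)
          ((Real.exp (-z) * (-1)) * A + ((Real.exp (-z) * (-1)) * F z + Real.exp (-z) * f z)) z :=
        ((hEz.sub_const 1).mul_const A).add (hEz.mul (hasDerivF z hz))
      have h2 : HasDerivAt T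
          ((Real.exp (-z) * (-1)) * A + ((Real.exp (-z) * (-1)) * F z + Real.exp (-z) * f z)) z :=
        h1.congr_of_eventuallyEq (Filter.Eventually.of_forall hTF)
      convert h2 using 1
      rw [hG]
      simp only [f]
      linear_combination (-(Real.log ((1 - z) / z))) * hz1
    have hdT : deriv T x = G x := (hderivT x hx).deriv
    have hev : deriv T =ᶠ[nhds x] G := by
      filter_upwards [Ioo_mem_nhds hx.1 hx.2] with z hz
      exact (hderivT z hz).deriv
    -- derivative of G
    have hL : HasDerivAt (fun x : ℝ => Real.log ((1 - x) / x)) (-(1 - x)⁻¹ - x⁻¹) x := by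
      have hl1 : HasDerivAt (fun x : ℝ => Real.log (1 - x)) ((1 - x)⁻¹ * (0 - 1)) x :=
        (Real.hasDerivAt_log hx1).comp x ((hasDerivAt_const x 1).sub (hasDerivAt_id x))
      have hl2 : HasDerivAt (fun x : ℝ => Real.log (1 - x) - Real.log x)
          ((1 - x)⁻¹ * (0 - 1) - x⁻¹) x := hl1.sub (Real.hasDerivAt_log hx0)
      have heq : (fun x : ℝ => Real.log ((1 - x) / x)) =ᶠ[nhds x]
          (fun x : ℝ => Real.log (1 - x) - Real.log x) := by
        filter_upwards [Ioo_mem_nhds hx.1 hx.2] with z hz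
        rw [Real.log_div (by linarith [hz.2]) hz.1.ne']
      have := hl2.congr_of_eventuallyEq heq
      exact this.congr_deriv (by ring)
    have hGd : HasDerivAt G
        (-((Real.exp (-x) * (-1)) * (A + F x) + Real.exp (-x) * (0 + f x)) + (-(1 - x)⁻¹ - x⁻¹)) x :=
      ((hE.mul ((hasDerivAt_const x A).add (hasDerivF x hx))).neg).add hL
    have hddT : deriv (deriv T) x =
        -((Real.exp (-x) * (-1)) * (A + F x) + Real.exp (-x) * (0 + f x)) + (-(1 - x)⁻¹ - x⁻¹) := by
      rw [hev.deriv_eq]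
      exact hGd.deriv
    refine ⟨(hderivT x hx).differentiableAt, ?_, ?_⟩
    · exact hev.differentiableAt_iff.mpr hGd.differentiableAt
    · rw [hdT, hddT]
      have h3 : Real.exp (-x) * (Real.exp x * Real.log ((1 - x) / x)) = Real.log ((1 - x) / x) := by
        rw [← mul_assoc, hexp1, one_mul]
      have hsum : G x + (-((Real.exp (-x) * (-1)) * (A + F x) + Real.exp (-x) * (0 + f x))
          + (-(1 - x)⁻¹ - x⁻¹)) = -(1 - x)⁻¹ - x⁻¹ := by
        rw [hG]
        simp only [f]
        linear_combination -h3
      rw [hsum]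
      field_simp
      ring
  · refine ⟨|K| + ∫ y in (0:ℝ)..1, |f y|, ?_⟩
    intro x hx
    rw [hTF x]
    have hE1 : Real.exp (-x) ≤ 1 := by
      rw [Real.exp_le_one_iff]; linarith [hx.1]
    have hE0 : 0 < Real.exp (-x) := Real.exp_pos _
    have hFb : |F x| ≤ ∫ y in (0:ℝ)..1, |f y| := by
      calc |F x| ≤ ∫ y in (0:ℝ)..x, |f y| :=
            intervalIntegral.abs_integral_le_integral_abs hx.1
        _ ≤ ∫ y in (0:ℝ)..1, |f y| := by
            apply intervalIntegral.integral_mono_interval le_rfl hx.1 hx.2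
            · exact Filter.Eventually.of_forall fun y => abs_nonneg _
            · exact intInt_f01.abs
    have h1 : |(Real.exp (-x) - 1) * A| ≤ |K| := by
      rw [abs_mul, hA, abs_div]
      have h2 : |Real.exp (-x) - 1| ≤ 1 := by rw [abs_sub_comm, abs_of_nonneg (by linarith)]; linarith
      have h3 : |Real.exp 1 - 1| ≥ 1 := by rw [abs_of_nonneg (by linarith)]; linarith
      calc |Real.exp (-x) - 1| * (|K| / |Real.exp 1 - 1|) ≤ 1 * (|K| / 1) := by
            apply mul_le_mul h2 _ (by positivity) zero_le_one
            apply div_le_div₀ (abs_nonneg K) le_rfl one_pos h3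
        _ = |K| := by ring
    have h2 : |Real.exp (-x) * F x| ≤ ∫ y in (0:ℝ)..1, |f y| := by
      rw [abs_mul, abs_of_pos hE0]
      calc Real.exp (-x) * |F x| ≤ 1 * |F x| := by
            apply mul_le_mul_of_nonneg_right hE1 (abs_nonneg _)
        _ = |F x| := one_mul _
        _ ≤ _ := hFb
    calc |(Real.exp (-x) - 1) * A + Real.exp (-x) * F x|
        ≤ |(Real.exp (-x) - 1) * A| + |Real.exp (-x) * F x| := abs_add_le _ _
      _ ≤ |K| + ∫ y in (0:ℝ)..1, |f y| := add_le_add h1 h2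
end
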